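/- Let μᵢ = N σᵢ² and ςᵢ = 2N|hᵢ|² P_s N_w + N N_w² with σᵢ² = |hᵢ|² P_s + N_w, |h₀|² ≠ |h₁|², and γ = P_s/N_w > 0. Then the positive solution T of (2πς₀)^{−1/2} exp(−(T−μ₀)²/(2ς₀)) = (2πς₁)^{−1/2} exp(−(T−μ₁)²/(2ς₁)) is T = N N_w/2 + N N_w √((|h₀|²γ + 1/2)(|h₁|²γ + 1/2)[1 + 2 ln((2|h₀|²γ+1)/(2|h₁|²γ+1))/(Nγ(|h₀|² − |h₁|²))]), provided the bracketed quantity is nonnegative. -/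

import Mathlib

open Real

set_option maxHeartbeats 1000000

/-- PSK-source suboptimal detector threshold: equating the two Gaussian densities with means
`μᵢ = Nσᵢ²` and variances `ςᵢ = 2N|hᵢ|²P_sN_w + NN_w²` yields the stated positive root. -/
theorem stmt12 (a0 a1 : ℝ) (ha0 : 0 ≤ a0) (ha1 : 0 ≤ a1) (hne : a0 ≠ a1)
    (Ps Nw : ℝ) (hPs : 0 < Ps) (hNw : 0 < Nw)
    (N : ℕ) (hN : 0 < N)
    (γ s0 s1 : ℝ) (hγ : γ = Ps / Nw)
    (hs0 : s0 = a0 * Ps + Nw) (hs1 : s1 = a1 * Ps + Nw)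
    (μ ς : Fin 2 → ℝ)
    (hμ0 : μ 0 = N * s0) (hμ1 : μ 1 = N * s1)
    (hς0 : ς 0 = 2 * N * a0 * Ps * Nw + N * Nw ^ 2)
    (hς1 : ς 1 = 2 * N * a1 * Ps * Nw + N * Nw ^ 2)
    (hdisc : 0 ≤ 1 + 2 * Real.log ((2 * a0 * γ + 1) / (2 * a1 * γ + 1)) / (N * γ * (a0 - a1)))
    (T : ℝ) (hT : 0 < T) :
    (2 * Real.pi * ς 0) ^ (-(1:ℝ)/2) * Real.exp (-(T - μ 0) ^ 2 / (2 * ς 0)) =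
        (2 * Real.pi * ς 1) ^ (-(1:ℝ)/2) * Real.exp (-(T - μ 1) ^ 2 / (2 * ς 1)) ↔
      T = N * Nw / 2 + N * Nw * Real.sqrt ((a0 * γ + 1 / 2) * (a1 * γ + 1 / 2) *
        (1 + 2 * Real.log ((2 * a0 * γ + 1) / (2 * a1 * γ + 1)) / (N * γ * (a0 - a1)))) := by
  have hNw' : Nw ≠ 0 := ne_of_gt hNw
  have hN' : (0:ℝ) < (N:ℝ) := by exact_mod_cast hN
  have hγpos : 0 < γ := by rw [hγ]; positivity
  have hPsγ : Ps = γ * Nw := by rw [hγ]; field_simp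
  have hane : a0 - a1 ≠ 0 := sub_ne_zero.mpr hne
  set L := Real.log ((2 * a0 * γ + 1) / (2 * a1 * γ + 1)) with hLdef
  set E := 2 * L / ((N:ℝ) * γ * (a0 - a1)) with hEdef
  clear_value L
  have hE : E * ((N:ℝ) * γ * (a0 - a1)) = 2 * L := by
    rw [hEdef]; field_simp
  have h01 : (0:ℝ) < 2 * a0 * γ + 1 := by positivity
  have h11 : (0:ℝ) < 2 * a1 * γ + 1 := by positivity
  have hEpos : 0 ≤ E := by
    rcases lt_or_gt_of_ne hne with hlt | hgt
    · have hLneg : L ≤ 0 := by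
        rw [hLdef]
        apply le_of_lt
        apply Real.log_neg (by positivity)
        rw [div_lt_one h11]
        nlinarith
      rw [hEdef]
      apply div_nonneg_iff.mpr
      right
      constructor
      · linarith
      · exact le_of_lt (mul_neg_of_pos_of_neg (mul_pos hN' hγpos) (by linarith))
    · have hLpos : 0 ≤ L := by
        rw [hLdef]
        apply Real.log_nonneg
        rw [le_div_iff₀ h11]
        nlinarith
      rw [hEdef]
      apply div_nonneg (by linarith)
      exact le_of_lt (mul_pos (mul_pos hN' hγpos) (by linarith))
  clear_value E
  set D := (a0 * γ + 1 / 2) * (a1 * γ + 1 / 2) * (1 + E) with hDdef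
  clear_value D
  have hDq : (1:ℝ)/4 ≤ D := by
    have h1 : (1:ℝ)/4 ≤ (a0 * γ + 1 / 2) * (a1 * γ + 1 / 2) := by
      nlinarith [mul_nonneg ha0 hγpos.le, mul_nonneg ha1 hγpos.le,
        mul_nonneg (mul_nonneg ha0 hγpos.le) (mul_nonneg ha1 hγpos.le)]
    rw [hDdef]
    calc (1:ℝ)/4 ≤ (a0 * γ + 1 / 2) * (a1 * γ + 1 / 2) := h1
      _ ≤ (a0 * γ + 1 / 2) * (a1 * γ + 1 / 2) * (1 + E) :=
          le_mul_of_one_le_right (by positivity) (by linarith)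
  have hDnn : 0 ≤ D := by linarith
  set K := Real.sqrt D with hKdef
  clear_value K
  have hK2 : K ^ 2 = D := by rw [hKdef]; exact Real.sq_sqrt hDnn
  have hKhalf : (1:ℝ)/2 ≤ K := by
    rw [hKdef, show (1:ℝ)/2 = Real.sqrt (1/4) by
      rw [show (1:ℝ)/4 = (1/2)^2 by norm_num, Real.sqrt_sq (by norm_num)]]
    exact Real.sqrt_le_sqrt hDq
  set r := (N:ℝ) * Nw / 2 + (N:ℝ) * Nw * K with hrdef
  clear_value r
  -- simplified forms
  have hς0' : ς 0 = (N:ℝ) * Nw ^ 2 * (2 * a0 * γ + 1) := by rw [hς0, hPsγ]; ring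
  have hς1' : ς 1 = (N:ℝ) * Nw ^ 2 * (2 * a1 * γ + 1) := by rw [hς1, hPsγ]; ring
  have hμ0' : μ 0 = (N:ℝ) * Nw * (a0 * γ + 1) := by rw [hμ0, hs0, hPsγ]; ring
  have hμ1' : μ 1 = (N:ℝ) * Nw * (a1 * γ + 1) := by rw [hμ1, hs1, hPsγ]; ring
  have hς0pos : 0 < ς 0 := by rw [hς0']; positivity
  have hς1pos : 0 < ς 1 := by rw [hς1']; positivity
  have h2π0 : 0 < 2 * Real.pi * ς 0 := by positivity
  have h2π1 : 0 < 2 * Real.pi * ς 1 := by positivity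
  have hlog : Real.log (2 * Real.pi * ς 0) - Real.log (2 * Real.pi * ς 1) = L := by
    rw [Real.log_mul (by positivity) hς0pos.ne', Real.log_mul (by positivity) hς1pos.ne']
    have : Real.log (ς 0) - Real.log (ς 1) = L := by
      rw [← Real.log_div hς0pos.ne' hς1pos.ne', hLdef]
      congr 1
      rw [hς0', hς1']
      exact mul_div_mul_left _ _ (by positivity)
    linarith only [this]
  -- the key polynomial identity
  have poly : ς 0 * (T - μ 1) ^ 2 - ς 1 * (T - μ 0) ^ 2 - ς 0 * ς 1 * L =
      (2 * (N:ℝ) * Nw ^ 2 * γ * (a0 - a1)) * ((T - r) * (T - ((N:ℝ) * Nw - r))) := by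
    have hK2' : K ^ 2 = (a0 * γ + 1 / 2) * (a1 * γ + 1 / 2) * (1 + E) := by
      rw [hK2, hDdef]
    rw [hς0', hς1', hμ0', hμ1', hrdef]
    linear_combination (-(2:ℝ) * (N:ℝ)^3 * Nw^4 * γ * (a1 - a0)) * hK2' +
      ((2:ℝ) * (N:ℝ)^2 * Nw^4 * (a0 * γ + 1/2) * (a1 * γ + 1/2)) * hE
  have hCne : (2 * (N:ℝ) * Nw ^ 2 * γ * (a0 - a1)) ≠ 0 :=
    mul_ne_zero (by positivity) hane
  -- rewrite the equation
  rw [Real.rpow_def_of_pos h2π0, Real.rpow_def_of_pos h2π1, ← Real.exp_add, ← Real.exp_add,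
    Real.exp_eq_exp]
  have hAB : Real.log (2 * Real.pi * ς 0) * (-(1:ℝ)/2) + -(T - μ 0) ^ 2 / (2 * ς 0) -
      (Real.log (2 * Real.pi * ς 1) * (-(1:ℝ)/2) + -(T - μ 1) ^ 2 / (2 * ς 1)) =
      (ς 0 * (T - μ 1) ^ 2 - ς 1 * (T - μ 0) ^ 2 - ς 0 * ς 1 * L) / (2 * ς 0 * ς 1) := by
    field_simp
    linear_combination (-(ς 0 * ς 1)) * hlog
  constructor
  · intro h
    have hz : (ς 0 * (T - μ 1) ^ 2 - ς 1 * (T - μ 0) ^ 2 - ς 0 * ς 1 * L) = 0 := by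
      have h0 : (ς 0 * (T - μ 1) ^ 2 - ς 1 * (T - μ 0) ^ 2 - ς 0 * ς 1 * L) / (2 * ς 0 * ς 1) = 0 := by
        rw [← hAB, h]; ring
      have hden : (2 * ς 0 * ς 1) ≠ 0 := by positivity
      exact (div_eq_zero_iff.mp h0).resolve_right hden
    rw [poly] at hz
    rcases mul_eq_zero.mp hz with h' | h'
    · exact absurd h' hCne
    rcases mul_eq_zero.mp h' with h' | h'
    · exact sub_eq_zero.mp h'
    · exfalso
      have hTr : T = (N:ℝ) * Nw - r := sub_eq_zero.mp h'
      have hr2 : (N:ℝ) * Nw - r ≤ 0 := by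
        rw [hrdef]
        have hk : (N:ℝ) * Nw * (1/2) ≤ (N:ℝ) * Nw * K :=
          mul_le_mul_of_nonneg_left hKhalf (by positivity)
        linarith only [hk]
      rw [hTr] at hT
      exact absurd hr2 (not_le.mpr hT)
  · intro h
    have hz : (ς 0 * (T - μ 1) ^ 2 - ς 1 * (T - μ 0) ^ 2 - ς 0 * ς 1 * L) = 0 := by
      rw [poly, h]
      ring
    have : Real.log (2 * Real.pi * ς 0) * (-(1:ℝ)/2) + -(T - μ 0) ^ 2 / (2 * ς 0) -
        (Real.log (2 * Real.pi * ς 1) * (-(1:ℝ)/2) + -(T - μ 1) ^ 2 / (2 * ς 1)) = 0 := by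
      rw [hAB, hz]; ring
    exact sub_eq_zero.mp this
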